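/- Let A be a commutative ring and F an A-module. Then F is finitely generated if and only if for every filtered system (N_λ) of A-modules with injective transition maps, the natural map colim_λ Hom_A(F, N_λ) → Hom_A(F, colim_λ N_λ) is bijective. -/

import Mathlib

universe u

/-- An `A`-module `F` is finitely generated if and only if, for every filtered (directed)
system of `A`-modules `(G_λ)` with injective transition maps, the natural map
`colim Hom_A(F, G_λ) → Hom_A(F, colim G_λ)` is bijective. -/
theorem finiteGeneration_iff_hom_commutes_with_injective_filtered_colimits
    (A : Type u) [CommRing A] (F : Type u) [AddCommGroup F] [Module A F] :
    Module.Finite A F ↔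
      ∀ (ι : Type u) [Preorder ι] [IsDirected ι (· ≤ ·)] [Nonempty ι] [DecidableEq ι]
        (G : ι → Type u) [∀ i, AddCommGroup (G i)] [∀ i, Module A (G i)]
        (f : ∀ i j, i ≤ j → G i →ₗ[A] G j) [DirectedSystem G (fun i j h => f i j h)]
        (hinj : ∀ (i j : ι) (h : i ≤ j), Function.Injective (f i j h)),
        Function.Bijective
          (Module.DirectLimit.lift A ι (fun i => F →ₗ[A] G i)
            (fun i j h => LinearMap.llcomp A F (G i) (G j) (f i j h))
            (fun i => LinearMap.llcomp A F (G i) (Module.DirectLimit G f)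
              (Module.DirectLimit.of A ι G f i))
            (by intro i j hij x; ext y; exact Module.DirectLimit.of_f)) := by
  constructor
  · intro hF ι _ _ _ _ G _ _ f _ hinj
    haveI : DirectedSystem (fun i => F →ₗ[A] G i)
        (fun i j h => (LinearMap.llcomp A F (G i) (G j) (f i j h) : _)) := by
      constructor
      · intro i g; ext x
        exact DirectedSystem.map_self (f := fun i j h => ⇑(f i j h)) (g x)
      · intro k j i hij hjk g; ext x
        exact DirectedSystem.map_map (f := fun i j h => ⇑(f i j h)) hij hjk (g x)
    have hofinj : ∀ i, Function.Injective (Module.DirectLimit.of A ι G f i) := by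
      intro i
      rw [injective_iff_map_eq_zero]
      intro x hx
      obtain ⟨j, hij, hj⟩ := Module.DirectLimit.of.zero_exact hx
      exact hinj i j hij (by simpa using hj)
    constructor
    · exact Module.DirectLimit.lift_injective _ _ fun i g₁ g₂ h => by
        ext x
        exact hofinj i (LinearMap.congr_fun h x)
    · intro φ
      obtain ⟨n, π, hπ⟩ := Module.Finite.exists_fin' A F
      choose ik y hy using fun k : Fin n =>
        Module.DirectLimit.exists_of (φ (π (Pi.single k 1)))
      obtain ⟨i, hi⟩ := (Finset.univ.image ik).exists_le
      have hik : ∀ k, ik k ≤ i := fun k => hi _ (Finset.mem_image_of_mem ik (Finset.mem_univ k))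
      let ψ : (Fin n → A) →ₗ[A] G i :=
        LinearMap.lsum A (fun _ : Fin n => A) A fun k =>
          LinearMap.toSpanSingleton A (G i) (f (ik k) i (hik k) (y k))
      have key : ∀ v, Module.DirectLimit.of A ι G f i (ψ v) = φ (π v) := by
        intro v
        have hv0 : (∑ k, v k • (Pi.single k (1 : A) : Fin n → A)) = v := by
          simp [← Pi.single_smul, Finset.univ_sum_single]
        have hv : π v = ∑ k, v k • π (Pi.single k 1) := by
          conv_lhs => rw [← hv0]
          simp [map_sum]
        rw [hv]
        simp only [ψ, LinearMap.lsum_apply, LinearMap.coe_sum, LinearMap.coe_comp,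
          LinearMap.coe_proj, Finset.sum_apply, Function.comp_apply, Function.eval,
          LinearMap.toSpanSingleton_apply, map_sum, map_smul]
        refine Finset.sum_congr rfl fun k _ => ?_
        rw [Module.DirectLimit.of_f, hy k]
      have hker : LinearMap.ker π ≤ LinearMap.ker ψ := by
        intro x hx
        have : Module.DirectLimit.of A ι G f i (ψ x) = 0 := by
          rw [key, LinearMap.mem_ker.1 hx, map_zero]
        simpa [LinearMap.mem_ker] using hofinj i (by simpa using this)
      let e := LinearMap.quotKerEquivOfSurjective π hπ
      let g : F →ₗ[A] G i := ((LinearMap.ker π).liftQ ψ hker).comp e.symm.toLinearMap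
      have he : ∀ x, e (Submodule.Quotient.mk x) = π x := by
        intro x
        simp [e, LinearMap.quotKerEquivOfSurjective, LinearMap.quotKerEquivRange_apply_mk]
      have hg : ∀ x, g (π x) = ψ x := by
        intro x
        have : e.symm (π x) = Submodule.Quotient.mk x := by
          apply e.injective; rw [LinearEquiv.apply_symm_apply, he]
        simp [g, this]
      refine ⟨Module.DirectLimit.of A ι (fun i => F →ₗ[A] G i) _ i g, ?_⟩
      rw [Module.DirectLimit.lift_of]
      ext x
      obtain ⟨w, rfl⟩ := hπ x
      simp only [LinearMap.llcomp_apply, LinearMap.comp_apply]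
      rw [hg, key]
  · intro H
    classical
    let G : Finset F → Type u := fun S => Submodule.span A (S : Set F)
    let f : ∀ S T : Finset F, S ≤ T → G S →ₗ[A] G T := fun S T h =>
      Submodule.inclusion (Submodule.span_mono (Finset.coe_subset.2 h))
    haveI : DirectedSystem G (fun S T h => f S T h) := by
      constructor <;> intros <;> rfl
    have hinj : ∀ (S T : Finset F) (h : S ≤ T), Function.Injective (f S T h) :=
      fun S T h => Submodule.inclusion_injective _
    obtain ⟨hi, hs⟩ := H (Finset F) G f hinj
    haveI : DirectedSystem (fun S => F →ₗ[A] G S)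
        (fun S T h => (LinearMap.llcomp A F (G S) (G T) (f S T h) : _)) := by
      constructor <;> intros <;> rfl
    let π : Module.DirectLimit G f →ₗ[A] F :=
      Module.DirectLimit.lift A (Finset F) G f
        (fun S => (Submodule.span A (S : Set F)).subtype) (fun S T h x => rfl)
    have hπsurj : Function.Surjective π := by
      intro x
      refine ⟨Module.DirectLimit.of A (Finset F) G f {x}
        ⟨x, Submodule.subset_span (by simp)⟩, ?_⟩
      dsimp only [π]
      refine Eq.trans (Module.DirectLimit.lift_of ..) ?_
      rfl
    have hπinj : Function.Injective π :=
      Module.DirectLimit.lift_injective _ _ fun S => Subtype.val_injective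
    let eq : Module.DirectLimit G f ≃ₗ[A] F := LinearEquiv.ofBijective π ⟨hπinj, hπsurj⟩
    obtain ⟨c, hc⟩ := hs (eq.symm : F →ₗ[A] Module.DirectLimit G f)
    obtain ⟨S, g, rfl⟩ := Module.DirectLimit.exists_of c
    refine ⟨⟨S, eq_top_iff.2 fun x _ => ?_⟩⟩
    rw [Module.DirectLimit.lift_of] at hc
    have h1 : Module.DirectLimit.of A (Finset F) G f S (g x) = eq.symm x :=
      LinearMap.congr_fun hc x
    have h2 : π (Module.DirectLimit.of A (Finset F) G f S (g x)) = (g x : F) := by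
      dsimp only [π]
      refine Eq.trans (Module.DirectLimit.lift_of ..) ?_
      rfl
    have h3 : π (eq.symm x) = x := eq.apply_symm_apply x
    have h4 : x = (g x : F) := by
      calc x = π (eq.symm x) := h3.symm
        _ = π (Module.DirectLimit.of A (Finset F) G f S (g x)) := by rw [h1]
        _ = (g x : F) := h2
    rw [h4]
    exact (g x).2
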